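/- Let ν > 0, let 0 ≤ b < a, and let t > 0. Then I(t) = I_1(t) + I_2(t) + I_3(t), where I_1(t) := (1/((2t)^ν Γ(ν+1))) (a^{2ν} exp(-a²/(2t)) − b^{2ν} exp(-b²/(2t))), I_2(t) := F_{ν+1}(a,t) − F_{ν+1}(b,t), and I_3(t) := F_ν(b,t) (F_ν(a,t) − F_ν(b,t)) / (1 − F_ν(b,t)). -/

import Mathlib

open MeasureTheory Set Filter

lemma integ_aux {p t c : ℝ} (hp : p < -1) (ht : 0 < t) (hc : 0 ≤ c) :
    IntegrableOn (fun s => s ^ p * Real.exp (-c / (2 * s))) (Ioi t) := by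
  have base := integrableOn_Ioi_rpow_of_lt hp ht
  refine base.mono' ?_ ?_
  · refine (ContinuousOn.mul ?_ ?_).aestronglyMeasurable measurableSet_Ioi
    · exact fun x hx => (Real.continuousAt_rpow_const x p
        (Or.inl (ne_of_gt (ht.trans hx)))).continuousWithinAt
    · refine Real.continuous_exp.comp_continuousOn ?_
      refine continuousOn_const.div ((continuous_const.mul continuous_id).continuousOn) ?_
      intro x hx
      have : (0:ℝ) < x := ht.trans hx
      positivity
  · filter_upwards [ae_restrict_mem measurableSet_Ioi] with s hs
    have hs0 : 0 < s := ht.trans hs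
    have h1 : Real.exp (-c / (2 * s)) ≤ 1 := by
      rw [Real.exp_le_one_iff]
      apply div_nonpos_of_nonpos_of_nonneg <;> [linarith; positivity]
    have h2 : 0 < s ^ p := Real.rpow_pos_of_pos hs0 p
    rw [norm_mul, Real.norm_eq_abs, Real.norm_eq_abs, abs_of_nonneg h2.le,
      abs_of_nonneg (Real.exp_pos _).le]
    nlinarith

/-- `F ν x t = (x^{2ν}/(2^ν Γ(ν))) ∫_t^∞ s^{-(ν+1)} exp(-x²/(2s)) ds`. -/
noncomputable def F (ν x t : ℝ) : ℝ :=
  (x ^ (2 * ν) / (2 ^ ν * Real.Gamma ν)) *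
    ∫ s in Set.Ioi t, s ^ (-(ν + 1)) * Real.exp (-x ^ 2 / (2 * s))

lemma key_ibp {ν x t : ℝ} (hν : 0 < ν) (ht : 0 < t) :
    ν * ∫ s in Ioi t, s ^ (-(ν + 1)) * Real.exp (-x ^ 2 / (2 * s))
      = t ^ (-ν) * Real.exp (-x ^ 2 / (2 * t))
        + (x ^ 2 / 2) * ∫ s in Ioi t, s ^ (-(ν + 2)) * Real.exp (-x ^ 2 / (2 * s)) := by
  set f : ℝ → ℝ := fun s => s ^ (-ν) * Real.exp (-x ^ 2 / (2 * s)) with hf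
  set f' : ℝ → ℝ := fun s =>
      (-ν) * (s ^ (-(ν + 1)) * Real.exp (-x ^ 2 / (2 * s)))
        + (x ^ 2 / 2) * (s ^ (-(ν + 2)) * Real.exp (-x ^ 2 / (2 * s))) with hf'
  have hx2 : (0:ℝ) ≤ x ^ 2 := sq_nonneg x
  have int1 := integ_aux (p := -(ν + 1)) (by linarith) ht hx2
  have int2 := integ_aux (p := -(ν + 2)) (by linarith) ht hx2
  have hderiv : ∀ s ∈ Ioi t, HasDerivAt f (f' s) s := by
    intro s hs
    have hs0 : 0 < s := ht.trans hs
    have d1 : HasDerivAt (fun s : ℝ => s ^ (-ν)) (-ν * s ^ (-ν - 1)) s :=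
      Real.hasDerivAt_rpow_const (Or.inl hs0.ne')
    have d2 : HasDerivAt (fun s : ℝ => -x ^ 2 / (2 * s)) (x ^ 2 / (2 * s ^ 2)) s := by
      have hd : HasDerivAt (fun s : ℝ => 2 * s) 2 s := by
        simpa using (hasDerivAt_id s).const_mul 2
      have : HasDerivAt (fun s : ℝ => -x ^ 2 / (2 * s))
          ((0 * (2 * s) - (-x ^ 2) * 2) / (2 * s) ^ 2) s :=
        (hasDerivAt_const s (-x ^ 2)).div hd (by positivity)
      convert this using 1
      field_simp
      ring
    have d3 : HasDerivAt (fun s : ℝ => Real.exp (-x ^ 2 / (2 * s)))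
        (Real.exp (-x ^ 2 / (2 * s)) * (x ^ 2 / (2 * s ^ 2))) s := (Real.hasDerivAt_exp _).comp s d2
    have := d1.mul d3
    refine this.congr_deriv ?_
    simp only [hf']
    have e1 : s ^ (-(ν + 1)) = s ^ (-ν - 1) := by ring_nf
    have e2 : s ^ (-(ν + 2)) = s ^ (-ν) / s ^ 2 := by
      rw [eq_div_iff (by positivity), ← Real.rpow_two,
        ← Real.rpow_add hs0]
      norm_num
    rw [e1, e2]
    field_simp
  have htend : Tendsto f atTop (nhds 0) := by
    have h1 : Tendsto (fun s : ℝ => s ^ (-ν)) atTop (nhds 0) := tendsto_rpow_neg_atTop hν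
    have h2 : Tendsto (fun s : ℝ => Real.exp (-x ^ 2 / (2 * s))) atTop (nhds 1) := by
      have h3 : Tendsto (fun s : ℝ => -x ^ 2 / (2 * s)) atTop (nhds 0) := by
        have : (fun s : ℝ => -x ^ 2 / (2 * s)) = fun s : ℝ => -x ^ 2 / 2 * s⁻¹ := by
          funext s; ring
        rw [this]
        have h4 := tendsto_inv_atTop_zero.const_mul (-x ^ 2 / 2)
        rwa [mul_zero] at h4
      simpa [Function.comp_def] using (Real.continuous_exp.tendsto 0).comp h3
    simpa using h1.mul h2
  have hcont : ContinuousWithinAt f (Ici t) t := by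
    apply ContinuousAt.continuousWithinAt
    apply ContinuousAt.mul
    · exact Real.continuousAt_rpow_const t (-ν) (Or.inl ht.ne')
    · exact Real.continuous_exp.continuousAt.comp
        ((continuousAt_const.div (continuous_const.mul continuous_id).continuousAt (by positivity)))
  have hfint : IntegrableOn f' (Ioi t) := (int1.const_mul _).add (int2.const_mul _)
  have := integral_Ioi_of_hasDerivAt_of_tendsto hcont hderiv hfint htend
  rw [integral_add (int1.const_mul _) (int2.const_mul _), integral_const_mul,
    integral_const_mul] at this
  simp only [hf, zero_sub] at this
  linarith [this]

lemma F_rec {ν x t : ℝ} (hν : 0 < ν) (hx : 0 ≤ x) (ht : 0 < t) :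
    F ν x t = x ^ (2 * ν) * Real.exp (-x ^ 2 / (2 * t)) / ((2 * t) ^ ν * Real.Gamma (ν + 1))
      + F (ν + 1) x t := by
  rcases eq_or_lt_of_le hx with rfl | hx0
  · simp [F, Real.zero_rpow (by positivity : 2 * ν ≠ 0),
      Real.zero_rpow (by positivity : 2 * (ν + 1) ≠ 0)]
  have hkey := key_ibp (ν := ν) (x := x) (t := t) hν ht
  set A := ∫ s in Ioi t, s ^ (-(ν + 1)) * Real.exp (-x ^ 2 / (2 * s)) with hA
  have hB : (∫ s in Ioi t, s ^ (-(ν + 1 + 1)) * Real.exp (-x ^ 2 / (2 * s)))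
      = ∫ s in Ioi t, s ^ (-(ν + 2)) * Real.exp (-x ^ 2 / (2 * s)) := by
    rw [show -(ν + 1 + 1) = -(ν + 2) by ring]
  set B := ∫ s in Ioi t, s ^ (-(ν + 2)) * Real.exp (-x ^ 2 / (2 * s)) with hBdef
  rw [F, F, ← hA, hB]
  have hG1 : Real.Gamma (ν + 1) = ν * Real.Gamma ν := Real.Gamma_add_one hν.ne'
  have hGpos : 0 < Real.Gamma ν := Real.Gamma_pos_of_pos hν
  have e1 : x ^ (2 * (ν + 1)) = x ^ (2 * ν) * x ^ 2 := by
    rw [show 2 * (ν + 1) = 2 * ν + 2 by ring, Real.rpow_add hx0, Real.rpow_two]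
  have e2 : (2 * t : ℝ) ^ ν = 2 ^ ν * t ^ ν := Real.mul_rpow (by norm_num) ht.le
  have e3 : (2 : ℝ) ^ (ν + 1) = 2 ^ ν * 2 := by
    rw [Real.rpow_add (by norm_num), Real.rpow_one]
  have e4 : t ^ (-ν) = (t ^ ν)⁻¹ := Real.rpow_neg ht.le ν
  rw [e1, e2, e3, hG1]
  rw [e4] at hkey
  have h2ν : (0:ℝ) < 2 ^ ν := by positivity
  have htν : (0:ℝ) < t ^ ν := Real.rpow_pos_of_pos ht ν
  field_simp
  field_simp at hkey
  linear_combination hkey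

lemma F_lt_one {ν b t : ℝ} (hν : 0 < ν) (hb : 0 ≤ b) (ht : 0 < t) : F ν b t < 1 := by
  rcases eq_or_lt_of_le hb with rfl | hb0
  · simpa [F, Real.zero_rpow (by positivity : 2 * ν ≠ 0)] using one_pos
  set T : ℝ := b ^ 2 / (2 * t) with hT
  have hT0 : 0 < T := by positivity
  set g : ℝ → ℝ := fun u => Real.exp (-u) * u ^ (ν - 1) with hg
  set φ : ℝ → ℝ := fun s => b ^ 2 / (2 * s) with hφ
  have himg : φ '' Ioi t = Ioo 0 T := by
    ext u
    constructor
    · rintro ⟨s, hs, rfl⟩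
      have hts : t < s := hs
      have hs0 : 0 < s := ht.trans hts
      refine ⟨by positivity, ?_⟩
      rw [hT, hφ]
      exact div_lt_div_of_pos_left (by positivity) (by positivity) (by linarith)
    · rintro ⟨hu0, huT⟩
      have huT' : u * (2 * t) < b ^ 2 := by
        rw [hT, lt_div_iff₀ (by positivity)] at huT
        linarith
      refine ⟨b ^ 2 / (2 * u), ?_, ?_⟩
      · rw [mem_Ioi, lt_div_iff₀ (by positivity)]
        nlinarith
      · rw [hφ]
        field_simp
  have hderiv : ∀ s ∈ Ioi t, HasDerivWithinAt φ (-(b ^ 2) / (2 * s ^ 2)) (Ioi t) s := by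
    intro s hs
    have hts : t < s := hs
    have hs0 : 0 < s := ht.trans hts
    have hd : HasDerivAt (fun s : ℝ => 2 * s) 2 s := by
      simpa using (hasDerivAt_id s).const_mul 2
    have h2 : HasDerivAt φ ((0 * (2 * s) - b ^ 2 * 2) / (2 * s) ^ 2) s :=
      (hasDerivAt_const s (b ^ 2)).div hd (by positivity)
    refine HasDerivAt.hasDerivWithinAt ?_
    refine h2.congr_deriv ?_
    ring
  have hinj : InjOn φ (Ioi t) := by
    intro s1 h1 s2 h2 he
    have h10 : 0 < s1 := ht.trans h1
    have h20 : 0 < s2 := ht.trans h2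
    rw [hφ] at he
    rw [div_eq_div_iff (by positivity) (by positivity)] at he
    have := mul_left_cancel₀ (by positivity : (b ^ 2 : ℝ) ≠ 0) he
    linarith
  have hcov := integral_image_eq_integral_abs_deriv_smul measurableSet_Ioi hderiv hinj g
  rw [himg] at hcov
  have hrhs : (∫ s in Ioi t, |(-(b ^ 2) / (2 * s ^ 2))| • g (φ s))
      = (b ^ 2 / 2) ^ ν * ∫ s in Ioi t, s ^ (-(ν + 1)) * Real.exp (-b ^ 2 / (2 * s)) := by
    rw [← integral_const_mul]
    apply setIntegral_congr_fun measurableSet_Ioi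
    intro s hs
    have hts : t < s := hs
    have hs0 : 0 < s := ht.trans hts
    have hnp : (-b ^ 2 / (2 * s ^ 2) : ℝ) ≤ 0 :=
      div_nonpos_of_nonpos_of_nonneg (by nlinarith [sq_nonneg b]) (by positivity)
    have habs : |(-b ^ 2 / (2 * s ^ 2) : ℝ)| = b ^ 2 / (2 * s ^ 2) := by
      rw [abs_of_nonpos hnp]
      ring
    simp only [smul_eq_mul, habs, hg, hφ]
    have e0 : b ^ 2 / (2 * s) = b ^ 2 / 2 * s⁻¹ := by ring
    have e1 : (b ^ 2 / (2 * s)) ^ (ν - 1) = (b ^ 2 / 2) ^ (ν - 1) * (s ^ (ν - 1))⁻¹ := by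
      rw [e0, Real.mul_rpow (by positivity) (by positivity), Real.inv_rpow hs0.le]
    have e2 : (b ^ 2 / 2 : ℝ) ^ ν = (b ^ 2 / 2) ^ (ν - 1) * (b ^ 2 / 2) := by
      rw [← Real.rpow_add_one (by positivity) (ν - 1)]
      ring_nf
    have e3 : s ^ (-(ν + 1)) = (s ^ (ν - 1))⁻¹ / s ^ 2 := by
      rw [eq_div_iff (by positivity), ← Real.rpow_neg hs0.le, ← Real.rpow_two,
        ← Real.rpow_add hs0]
      ring_nf
    have e4 : -(b ^ 2 / (2 * s)) = -b ^ 2 / (2 * s) := by ring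
    rw [e1, e2, e3, e4]
    have hsp : (0:ℝ) < s ^ (ν - 1) := Real.rpow_pos_of_pos hs0 _
    field_simp
  rw [hrhs] at hcov
  -- now F ν b t = (∫ u in Ioo 0 T, g u) / Γ ν
  have hF : F ν b t = (∫ u in Ioo 0 T, g u) / Real.Gamma ν := by
    rw [F, hcov]
    have eb : b ^ (2 * ν) = (b ^ 2) ^ ν := by
      rw [← Real.rpow_natCast b 2, ← Real.rpow_mul hb]
      norm_num
    have eb2 : ((b ^ 2 : ℝ)) ^ ν / 2 ^ ν = (b ^ 2 / 2) ^ ν := by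
      rw [Real.div_rpow (by positivity) (by norm_num)]
    rw [eb, ← eb2]
    have h2 : ((2:ℝ) ^ ν) ≠ 0 := by positivity
    have hG : Real.Gamma ν ≠ 0 := (Real.Gamma_pos_of_pos hν).ne'
    field_simp
  have hGpos : 0 < Real.Gamma ν := Real.Gamma_pos_of_pos hν
  rw [hF, div_lt_one hGpos]
  have hGint := Real.GammaIntegral_convergent hν
  have hGeq : Real.Gamma ν = ∫ u in Ioi 0, g u := Real.Gamma_eq_integral hν
  have hsplit : (Ioo 0 T) ∪ (Ici T) = Ioi (0:ℝ) := Ioo_union_Ici_eq_Ioi hT0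
  have hint1 : IntegrableOn g (Ioo 0 T) := hGint.mono_set (by rw [← hsplit]; exact subset_union_left)
  have hint2 : IntegrableOn g (Ici T) := hGint.mono_set (by rw [← hsplit]; exact subset_union_right)
  have hdisj : Disjoint (Ioo (0:ℝ) T) (Ici T) :=
    (Set.Iio_disjoint_Ici le_rfl).mono_left Ioo_subset_Iio_self
  have hun : (∫ u in Ioi (0:ℝ), g u) = (∫ u in Ioo 0 T, g u) + ∫ u in Ici T, g u := by
    rw [← hsplit, setIntegral_union hdisj measurableSet_Ici hint1 hint2]
  have hpos : 0 < ∫ u in Ici T, g u := by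
    rw [setIntegral_pos_iff_support_of_nonneg_ae ?_ hint2]
    · have hsub : Ici T ⊆ Function.support g ∩ Ici T := by
        intro u hu
        refine ⟨?_, hu⟩
        have hu0 : 0 < u := lt_of_lt_of_le hT0 hu
        rw [hg, Function.mem_support]
        positivity
      refine lt_of_lt_of_le ?_ (measure_mono hsub)
      rw [Real.volume_Ici]
      simp
    · filter_upwards [ae_restrict_mem measurableSet_Ici] with u hu
      have hu0 : 0 < u := lt_of_lt_of_le hT0 hu
      rw [hg]
      positivity
  rw [hGeq, hun]
  linarith


theorem stmt_9 (ν a b t : ℝ) (hν : 0 < ν) (hb : 0 ≤ b) (hba : b < a) (ht : 0 < t) :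
    (F ν a t - F ν b t) / (1 - F ν b t) =
      (1 / ((2 * t) ^ ν * Real.Gamma (ν + 1))) *
          (a ^ (2 * ν) * Real.exp (-a ^ 2 / (2 * t)) -
            b ^ (2 * ν) * Real.exp (-b ^ 2 / (2 * t)))
        + (F (ν + 1) a t - F (ν + 1) b t)
        + F ν b t * (F ν a t - F ν b t) / (1 - F ν b t) := by
  have ha : (0:ℝ) ≤ a := hb.trans hba.le
  have hra := F_rec hν ha ht
  have hrb := F_rec hν hb ht
  have hlt := F_lt_one hν hb ht
  have hne : 1 - F ν b t ≠ 0 := by linarith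
  have h1 : (1 / ((2 * t) ^ ν * Real.Gamma (ν + 1))) *
          (a ^ (2 * ν) * Real.exp (-a ^ 2 / (2 * t)) -
            b ^ (2 * ν) * Real.exp (-b ^ 2 / (2 * t)))
        + (F (ν + 1) a t - F (ν + 1) b t) = F ν a t - F ν b t := by
    rw [hra, hrb]
    ring
  rw [h1]
  field_simp
  ring
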